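/- Let K be a number field, 𝔭 a nonzero prime ideal of its ring of integers, ν_𝔭 the normalized 𝔭-adic additive valuation on K, and let t ∈ K with ν_𝔭(t) = −k for some integer k > 0. Then the rational expressions j₁ = S₄(t)³/(S₁(t)·S₃(t)²⁵), j₂ = S₁₀(t)³·S₁₁(t)³·S₁₂(t)³/(S₁(t)⁵·S₃(t)⁵), and j₃ = S₇(t)³/(S₁(t)·S₃(t)) are defined (all factors in the denominators are nonzero) and satisfy ν_𝔭(j₁) = −k, ν_𝔭(j₂) = −5k, and ν_𝔭(j₃) = −25k. -/

import Mathlib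

noncomputable section

open IsDedekindDomain NumberField

/-- The polynomial `S1`. -/
def S1 {K : Type*} [Field K] (t : K) : K := t ^ 4 + t ^ 3 + 6 * t ^ 2 + 6 * t + 11

/-- The polynomial `S3`. -/
def S3 {K : Type*} [Field K] (t : K) : K := t - 1

/-- The polynomial `S4`. -/
def S4 {K : Type*} [Field K] (t : K) : K := t ^ 10 + 240 * t ^ 9 + 2170 * t ^ 8 + 8880 * t ^ 7 + 34835 * t ^ 6 + 83748 * t ^ 5 + 206210 * t ^ 4 + 313380 * t ^ 3 + 503545 * t ^ 2 + 424740 * t + 375376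

/-- The polynomial `S7`. -/
def S7 {K : Type*} [Field K] (t : K) : K := t ^ 10 + 10 * t ^ 8 + 35 * t ^ 6 - 12 * t ^ 5 + 50 * t ^ 4 - 60 * t ^ 3 + 25 * t ^ 2 - 60 * t + 16

/-- The polynomial `S10`. -/
def S10 {K : Type*} [Field K] (t : K) : K := t ^ 2 + 3 * t + 1

/-- The polynomial `S11`. -/
def S11 {K : Type*} [Field K] (t : K) : K := t ^ 4 - 4 * t ^ 3 + 11 * t ^ 2 - 14 * t + 31

/-- The polynomial `S12`. -/
def S12 {K : Type*} [Field K] (t : K) : K := t ^ 4 + t ^ 3 + 11 * t ^ 2 - 4 * t + 16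

open scoped Classical in
/-- The normalized `𝔭`-adic additive valuation on `K`, extended by `nu v 0 = 0`. -/
def nu {K : Type*} [Field K] [NumberField K]
    (v : HeightOneSpectrum (𝓞 K)) (x : K) : ℤ :=
  if hx : x = 0 then 0
  else -Multiplicative.toAdd (WithZero.unzero ((v.valuation K).ne_zero_iff.mpr hx))

/-- Auxiliary: the element `ofAdd m` of `ℤₘ₀`. -/
def gam (m : ℤ) : WithZero (Multiplicative ℤ) := (Multiplicative.ofAdd m : Multiplicative ℤ)

lemma gam_mul (a b : ℤ) : gam a * gam b = gam (a + b) := by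
  simp [gam, ← WithZero.coe_mul, ← ofAdd_add]

lemma gam_pow (a : ℤ) (n : ℕ) : gam a ^ n = gam (n * a) := by
  simp [gam, ← WithZero.coe_pow, ← ofAdd_nsmul, nsmul_eq_mul]

lemma gam_div (a b : ℤ) : gam a / gam b = gam (a - b) := by
  simp [gam, ← WithZero.coe_div, ← ofAdd_sub]

lemma gam_lt {a b : ℤ} : gam a < gam b ↔ a < b := by
  simp [gam, WithZero.coe_lt_coe]

section helpers

variable {K : Type*} [Field K] [NumberField K] (v : HeightOneSpectrum (𝓞 K))

lemma nu_of_val {x : K} {m : ℤ} (h : (v.valuation K) x = gam m) : x ≠ 0 ∧ nu v x = -m := by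
  have hx : x ≠ 0 := by
    intro h0
    rw [h0, map_zero] at h
    exact WithZero.coe_ne_zero h.symm
  refine ⟨hx, ?_⟩
  have hu : WithZero.unzero ((v.valuation K).ne_zero_iff.mpr hx) = Multiplicative.ofAdd m := by
    rw [← WithZero.coe_inj, WithZero.coe_unzero, h]; rfl
  rw [nu, dif_neg hx, hu, toAdd_ofAdd]

lemma val_int (n : ℤ) : (v.valuation K) ((n : K)) ≤ 1 := by
  rw [← map_intCast (algebraMap (𝓞 K) K) n]
  exact v.valuation_le_one _

variable {t : K} {k : ℤ}

lemma val_pow (h : (v.valuation K) t = gam k) (m : ℕ) :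
    (v.valuation K) (t ^ m) = gam (m * k) := by
  rw [map_pow, h]
  simp [gam, ← WithZero.coe_pow, ← ofAdd_nsmul, nsmul_eq_mul]

lemma term_lt (h : (v.valuation K) t = gam k) (hk : 0 < k)
    (c : ℤ) (m n : ℕ) (hmn : m < n) :
    (v.valuation K) ((c : K) * t ^ m) < gam ((n : ℤ) * k) := by
  have h1 : (v.valuation K) ((c : K) * t ^ m) ≤ gam ((m : ℤ) * k) := by
    rw [map_mul, val_pow v h]
    calc (v.valuation K) (c : K) * gam (m * k) ≤ 1 * gam (m * k) :=
          mul_le_mul_left (val_int v c) _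
      _ = gam (m * k) := one_mul _
  refine lt_of_le_of_lt h1 (gam_lt.mpr ?_)
  apply mul_lt_mul_of_pos_right _ hk
  exact_mod_cast hmn

lemma vstep {x y : K} {a : ℤ} (hx : (v.valuation K) x = gam a) (hy : (v.valuation K) y < gam a) :
    (v.valuation K) (x + y) = gam a := by
  rw [Valuation.map_add_eq_of_lt_left _ (by rw [hx]; exact hy), hx]

lemma valS1 (h : (v.valuation K) t = gam k) (hk : 0 < k) : (v.valuation K) (S1 t) = gam (4 * k) := by
  have e : S1 t = t ^ 4 + ((1 : ℤ) : K) * t ^ 3 + ((6 : ℤ) : K) * t ^ 2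
      + ((6 : ℤ) : K) * t ^ 1 + ((11 : ℤ) : K) * t ^ 0 := by
    rw [S1]; push_cast; ring
  rw [e]
  have h4 : (v.valuation K) (t ^ 4) = gam (4 * k) := by simpa using val_pow v h 4
  have L : ∀ (c : ℤ) (m : ℕ), m < 4 → (v.valuation K) ((c : K) * t ^ m) < gam (4 * k) := by
    intro c m hm
    simpa using term_lt v h hk c m 4 hm
  exact vstep v (vstep v (vstep v (vstep v h4 (L 1 3 (by norm_num)))
    (L 6 2 (by norm_num))) (L 6 1 (by norm_num))) (L 11 0 (by norm_num))

lemma valS3 (h : (v.valuation K) t = gam k) (hk : 0 < k) : (v.valuation K) (S3 t) = gam k := by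
  have e : S3 t = t ^ 1 + ((-1 : ℤ) : K) * t ^ 0 := by
    rw [S3]; push_cast; ring
  rw [e]
  have h1 : (v.valuation K) (t ^ 1) = gam k := by simpa using val_pow v h 1
  have L : (v.valuation K) (((-1 : ℤ) : K) * t ^ 0) < gam k := by
    simpa using term_lt v h hk (-1) 0 1 (by norm_num)
  exact vstep v h1 L

lemma valS4 (h : (v.valuation K) t = gam k) (hk : 0 < k) : (v.valuation K) (S4 t) = gam (10 * k) := by
  have e : S4 t = t ^ 10 + ((240 : ℤ) : K) * t ^ 9 + ((2170 : ℤ) : K) * t ^ 8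
      + ((8880 : ℤ) : K) * t ^ 7 + ((34835 : ℤ) : K) * t ^ 6 + ((83748 : ℤ) : K) * t ^ 5
      + ((206210 : ℤ) : K) * t ^ 4 + ((313380 : ℤ) : K) * t ^ 3 + ((503545 : ℤ) : K) * t ^ 2
      + ((424740 : ℤ) : K) * t ^ 1 + ((375376 : ℤ) : K) * t ^ 0 := by
    rw [S4]; push_cast; ring
  rw [e]
  have h10 : (v.valuation K) (t ^ 10) = gam (10 * k) := by simpa using val_pow v h 10
  have L : ∀ (c : ℤ) (m : ℕ), m < 10 → (v.valuation K) ((c : K) * t ^ m) < gam (10 * k) := by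
    intro c m hm
    simpa using term_lt v h hk c m 10 hm
  exact vstep v (vstep v (vstep v (vstep v (vstep v (vstep v (vstep v (vstep v (vstep v
    (vstep v h10 (L 240 9 (by norm_num))) (L 2170 8 (by norm_num)))
    (L 8880 7 (by norm_num))) (L 34835 6 (by norm_num))) (L 83748 5 (by norm_num)))
    (L 206210 4 (by norm_num))) (L 313380 3 (by norm_num))) (L 503545 2 (by norm_num)))
    (L 424740 1 (by norm_num))) (L 375376 0 (by norm_num))

lemma valS7 (h : (v.valuation K) t = gam k) (hk : 0 < k) : (v.valuation K) (S7 t) = gam (10 * k) := by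
  have e : S7 t = t ^ 10 + ((10 : ℤ) : K) * t ^ 8 + ((35 : ℤ) : K) * t ^ 6
      + ((-12 : ℤ) : K) * t ^ 5 + ((50 : ℤ) : K) * t ^ 4 + ((-60 : ℤ) : K) * t ^ 3
      + ((25 : ℤ) : K) * t ^ 2 + ((-60 : ℤ) : K) * t ^ 1 + ((16 : ℤ) : K) * t ^ 0 := by
    rw [S7]; push_cast; ring
  rw [e]
  have h10 : (v.valuation K) (t ^ 10) = gam (10 * k) := by simpa using val_pow v h 10
  have L : ∀ (c : ℤ) (m : ℕ), m < 10 → (v.valuation K) ((c : K) * t ^ m) < gam (10 * k) := by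
    intro c m hm
    simpa using term_lt v h hk c m 10 hm
  exact vstep v (vstep v (vstep v (vstep v (vstep v (vstep v (vstep v (vstep v h10
    (L 10 8 (by norm_num))) (L 35 6 (by norm_num))) (L (-12) 5 (by norm_num)))
    (L 50 4 (by norm_num))) (L (-60) 3 (by norm_num))) (L 25 2 (by norm_num)))
    (L (-60) 1 (by norm_num))) (L 16 0 (by norm_num))

lemma valS10 (h : (v.valuation K) t = gam k) (hk : 0 < k) : (v.valuation K) (S10 t) = gam (2 * k) := by
  have e : S10 t = t ^ 2 + ((3 : ℤ) : K) * t ^ 1 + ((1 : ℤ) : K) * t ^ 0 := by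
    rw [S10]; push_cast; ring
  rw [e]
  have h2 : (v.valuation K) (t ^ 2) = gam (2 * k) := by simpa using val_pow v h 2
  have L : ∀ (c : ℤ) (m : ℕ), m < 2 → (v.valuation K) ((c : K) * t ^ m) < gam (2 * k) := by
    intro c m hm
    simpa using term_lt v h hk c m 2 hm
  exact vstep v (vstep v h2 (L 3 1 (by norm_num))) (L 1 0 (by norm_num))

lemma valS11 (h : (v.valuation K) t = gam k) (hk : 0 < k) : (v.valuation K) (S11 t) = gam (4 * k) := by
  have e : S11 t = t ^ 4 + ((-4 : ℤ) : K) * t ^ 3 + ((11 : ℤ) : K) * t ^ 2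
      + ((-14 : ℤ) : K) * t ^ 1 + ((31 : ℤ) : K) * t ^ 0 := by
    rw [S11]; push_cast; ring
  rw [e]
  have h4 : (v.valuation K) (t ^ 4) = gam (4 * k) := by simpa using val_pow v h 4
  have L : ∀ (c : ℤ) (m : ℕ), m < 4 → (v.valuation K) ((c : K) * t ^ m) < gam (4 * k) := by
    intro c m hm
    simpa using term_lt v h hk c m 4 hm
  exact vstep v (vstep v (vstep v (vstep v h4 (L (-4) 3 (by norm_num)))
    (L 11 2 (by norm_num))) (L (-14) 1 (by norm_num))) (L 31 0 (by norm_num))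

lemma valS12 (h : (v.valuation K) t = gam k) (hk : 0 < k) : (v.valuation K) (S12 t) = gam (4 * k) := by
  have e : S12 t = t ^ 4 + ((1 : ℤ) : K) * t ^ 3 + ((11 : ℤ) : K) * t ^ 2
      + ((-4 : ℤ) : K) * t ^ 1 + ((16 : ℤ) : K) * t ^ 0 := by
    rw [S12]; push_cast; ring
  rw [e]
  have h4 : (v.valuation K) (t ^ 4) = gam (4 * k) := by simpa using val_pow v h 4
  have L : ∀ (c : ℤ) (m : ℕ), m < 4 → (v.valuation K) ((c : K) * t ^ m) < gam (4 * k) := by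
    intro c m hm
    simpa using term_lt v h hk c m 4 hm
  exact vstep v (vstep v (vstep v (vstep v h4 (L 1 3 (by norm_num)))
    (L 11 2 (by norm_num))) (L (-4) 1 (by norm_num))) (L 16 0 (by norm_num))

end helpers

theorem stmt9 {K : Type*} [Field K] [NumberField K] (v : HeightOneSpectrum (𝓞 K))
    (t : K) (k : ℤ) (hk : 0 < k) (ht : nu v t = -k) :
    S1 t ≠ 0 ∧ S3 t ≠ 0 ∧
    nu v (S4 t ^ 3 / (S1 t * S3 t ^ 25)) = -k ∧
    nu v (S10 t ^ 3 * S11 t ^ 3 * S12 t ^ 3 / (S1 t ^ 5 * S3 t ^ 5)) = -(5 * k) ∧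
    nu v (S7 t ^ 3 / (S1 t * S3 t)) = -(25 * k) := by
  have ht0 : t ≠ 0 := by
    intro h0
    rw [h0] at ht
    unfold nu at ht
    rw [dif_pos rfl] at ht
    omega
  have h : (v.valuation K) t = gam k := by
    have := ht
    rw [nu, dif_neg ht0] at this
    have hu : WithZero.unzero ((v.valuation K).ne_zero_iff.mpr ht0) = Multiplicative.ofAdd k := by
      have : Multiplicative.toAdd (WithZero.unzero ((v.valuation K).ne_zero_iff.mpr ht0)) = k := by
        omega
      rw [← this, ofAdd_toAdd]
    rw [← WithZero.coe_unzero ((v.valuation K).ne_zero_iff.mpr ht0), hu]; rfl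
  have v1 := valS1 v h hk
  have v3 := valS3 v h hk
  have v4 := valS4 v h hk
  have v7 := valS7 v h hk
  have v10 := valS10 v h hk
  have v11 := valS11 v h hk
  have v12 := valS12 v h hk
  refine ⟨(nu_of_val v v1).1, (nu_of_val v v3).1, ?_, ?_, ?_⟩
  · have hj : (v.valuation K) (S4 t ^ 3 / (S1 t * S3 t ^ 25)) = gam k := by
      simp only [map_div₀, map_mul, map_pow, v4, v1, v3, gam_pow, gam_mul, gam_div]
      congr 1; push_cast; ring
    simpa using (nu_of_val v hj).2
  · have hj : (v.valuation K) (S10 t ^ 3 * S11 t ^ 3 * S12 t ^ 3 / (S1 t ^ 5 * S3 t ^ 5))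
        = gam (5 * k) := by
      simp only [map_div₀, map_mul, map_pow, v10, v11, v12, v1, v3, gam_pow, gam_mul, gam_div]
      congr 1; push_cast; ring
    exact (nu_of_val v hj).2
  · have hj : (v.valuation K) (S7 t ^ 3 / (S1 t * S3 t)) = gam (25 * k) := by
      simp only [map_div₀, map_mul, map_pow, v7, v1, v3, gam_pow, gam_mul, gam_div]
      congr 1; push_cast; ring
    exact (nu_of_val v hj).2
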